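/- Let A be a self-adjoint operator on a Hilbert space with domain D and P an orthogonal projection with PD ⊆ D such that [A,P] is bounded with ‖[A,P]‖ ≤ d. Then PAP is self-adjoint on PD ⊕ P^⊥𝓗, and for every z ∈ ℂ with Im z ≠ 0, ‖P((A−z)^{-1} − (PAP−z)^{-1})P‖ ≤ d²/|Im z|³. -/

import Mathlib

open scoped LinearPMap
open scoped InnerProductSpace

/-- The compression `P A P` of an unbounded operator `A` by a bounded operator `P`,
defined on the domain `{x : P x ∈ D(A)}` (for an orthogonal projection `P` with
`P D ⊆ D` this domain is `PD ⊕ P^⊥𝓗`). -/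
noncomputable def LinearPMap.compress
    {𝓗 : Type*} [NormedAddCommGroup 𝓗] [InnerProductSpace ℂ 𝓗]
    (T : 𝓗 →ₗ.[ℂ] 𝓗) (P : 𝓗 →L[ℂ] 𝓗) : 𝓗 →ₗ.[ℂ] 𝓗 where
  domain := T.domain.comap (P : 𝓗 →ₗ[ℂ] 𝓗)
  toFun :=
    (P : 𝓗 →ₗ[ℂ] 𝓗) ∘ₗ T.toFun ∘ₗ
      (LinearMap.codRestrict T.domain
        ((P : 𝓗 →ₗ[ℂ] 𝓗) ∘ₗ (T.domain.comap (P : 𝓗 →ₗ[ℂ] 𝓗)).subtype)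
        (fun x => x.2))

section helpers
variable {𝓗 : Type*} [NormedAddCommGroup 𝓗] [InnerProductSpace ℂ 𝓗]

private lemma compress_apply' (T : 𝓗 →ₗ.[ℂ] 𝓗) (P : 𝓗 →L[ℂ] 𝓗)
    (x : (T.compress P).domain) :
    (T.compress P) x = P (T ⟨P (x:𝓗), x.2⟩) := rfl

private lemma sym_lower
    (T : 𝓗 →ₗ.[ℂ] 𝓗) (hsym : T.IsFormalAdjoint T) (z : ℂ) (x : T.domain) :
    |z.im| * ‖(x:𝓗)‖ ≤ ‖T x - z • (x:𝓗)‖ := by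
  have hreal : (⟪(x:𝓗), T x⟫_ℂ).im = 0 := by
    have h2 : (starRingEnd ℂ) ⟪(x:𝓗), T x⟫_ℂ = ⟪(x:𝓗), T x⟫_ℂ := by
      rw [inner_conj_symm]; exact hsym x x
    exact Complex.conj_eq_iff_im.mp h2
  have hxxre : (⟪(x:𝓗), (x:𝓗)⟫_ℂ).re = ‖(x:𝓗)‖^2 := by
    simpa using inner_self_eq_norm_sq (𝕜 := ℂ) ((x:𝓗))
  have hxxim : (⟪(x:𝓗), (x:𝓗)⟫_ℂ).im = 0 := inner_self_im (𝕜 := ℂ) ((x:𝓗))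
  have h1 : (⟪(x:𝓗), T x - z • (x:𝓗)⟫_ℂ).im = - (z.im * ‖(x:𝓗)‖^2) := by
    rw [inner_sub_right, inner_smul_right]
    simp only [Complex.sub_im, Complex.mul_im, hreal, hxxre, hxxim]
    ring
  have h2 : |z.im| * ‖(x:𝓗)‖^2 ≤ ‖(x:𝓗)‖ * ‖T x - z • (x:𝓗)‖ := by
    calc |z.im| * ‖(x:𝓗)‖^2 = |(⟪(x:𝓗), T x - z • (x:𝓗)⟫_ℂ).im| := by
          rw [h1, abs_neg, abs_mul, abs_of_nonneg (by positivity : (0:ℝ) ≤ ‖(x:𝓗)‖^2)]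
      _ ≤ ‖⟪(x:𝓗), T x - z • (x:𝓗)⟫_ℂ‖ := Complex.abs_im_le_norm _
      _ ≤ ‖(x:𝓗)‖ * ‖T x - z • (x:𝓗)‖ := norm_inner_le_norm _ _
  rcases eq_or_lt_of_le (norm_nonneg (x:𝓗)) with h | h
  · rw [← h]; simp
  · nlinarith [h2]

private lemma sym_inj
    (T : 𝓗 →ₗ.[ℂ] 𝓗) (hsym : T.IsFormalAdjoint T) {z : ℂ} (hz : z.im ≠ 0)
    (a b : T.domain) (h : T a - z • (a:𝓗) = T b - z • (b:𝓗)) : (a:𝓗) = (b:𝓗) := by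
  have h0 : T (a - b) - z • ((a - b : T.domain):𝓗) = 0 := by
    rw [T.map_sub]
    push_cast
    rw [smul_sub]
    rw [sub_eq_zero]
    linear_combination (norm := abel) h
  have := sym_lower T hsym z (a - b)
  rw [h0, norm_zero] at this
  have hn : ‖((a - b : T.domain):𝓗)‖ = 0 := by
    have h3 : 0 < |z.im| := abs_pos.mpr hz
    nlinarith [norm_nonneg ((a - b : T.domain):𝓗)]
  have h4 : ((a:𝓗) - (b:𝓗)) = 0 := by
    rw [← norm_eq_zero]
    simpa using hn
  exact sub_eq_zero.mp h4

end helpers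

/-- for a self-adjoint `A` with domain `D` and an orthogonal projection
`P` with `PD ⊆ D` and `‖[A,P]‖ ≤ d`, the compression `PAP` is self-adjoint on
`PD ⊕ P^⊥𝓗 = {x : Px ∈ D}`, and for every non-real `z` the resolvents satisfy
`‖P((A−z)⁻¹ − (PAP−z)⁻¹)P‖ ≤ d²/|Im z|³`. -/
theorem compressed_resolvent_estimate
    {𝓗 : Type*} [NormedAddCommGroup 𝓗] [InnerProductSpace ℂ 𝓗] [CompleteSpace 𝓗]
    (T : 𝓗 →ₗ.[ℂ] 𝓗) (hT : IsSelfAdjoint T)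
    (P : 𝓗 →L[ℂ] 𝓗) (hP2 : P ∘L P = P) (hPsa : IsSelfAdjoint P)
    (hPD : ∀ x ∈ T.domain, P x ∈ T.domain)
    (d : ℝ) (C : 𝓗 →L[ℂ] 𝓗) (hCn : ‖C‖ ≤ d)
    (hC : ∀ x : T.domain, C x = T ⟨P x, hPD x x.2⟩ - P (T x)) :
    IsSelfAdjoint (T.compress P) ∧
      ∀ z : ℂ, z.im ≠ 0 →
        ∀ (RA RS : 𝓗 →L[ℂ] 𝓗)
          (hRA : ∀ x : 𝓗, RA x ∈ T.domain)
          (hRS : ∀ x : 𝓗, RS x ∈ (T.compress P).domain),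
          (∀ x : 𝓗, T ⟨RA x, hRA x⟩ - z • RA x = x) →
          (∀ x : 𝓗, (T.compress P) ⟨RS x, hRS x⟩ - z • RS x = x) →
          ‖P ∘L (RA - RS) ∘L P‖ ≤ d ^ 2 / |z.im| ^ 3 := by
  have hT' : T.adjoint = T := LinearPMap.isSelfAdjoint_def.mp hT
  have hTd : Dense (T.domain : Set 𝓗) := hT.dense_domain
  have hTsym : T.IsFormalAdjoint T := by
    have h := LinearPMap.adjoint_isFormalAdjoint hTd; rwa [hT'] at h
  have hPP : ∀ v : 𝓗, P (P v) = P v := fun v => DFunLike.congr_fun hP2 v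
  have hP' : (ContinuousLinearMap.adjoint P) = P := hPsa.adjoint_eq
  have hPsym : ∀ x y : 𝓗, ⟪P x, y⟫_ℂ = ⟪x, P y⟫_ℂ := fun x y => by
    rw [← hP', ContinuousLinearMap.adjoint_inner_left, hP']
  -- membership in the compressed domain
  have hmem : ∀ x : 𝓗, x ∈ (T.compress P).domain ↔ P x ∈ T.domain := fun x => Iff.rfl
  -- density of the compressed domain
  have hSd : Dense (((T.compress P).domain : Submodule ℂ 𝓗) : Set 𝓗) := by
    intro x
    have hx : x ∈ closure (T.domain : Set 𝓗) := hTd x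
    have hcont : Continuous fun v : 𝓗 => P v + (x - P x) := by continuity
    have himg : (fun v : 𝓗 => P v + (x - P x)) '' (T.domain : Set 𝓗)
        ⊆ (((T.compress P).domain : Submodule ℂ 𝓗) : Set 𝓗) := by
      rintro _ ⟨v, hv, rfl⟩
      show P (P v + (x - P x)) ∈ T.domain
      have he : P (P v + (x - P x)) = P v := by
        rw [map_add, map_sub, hPP, hPP]; abel
      rw [he]; exact hPD v hv
    have h1 : x ∈ closure ((fun v : 𝓗 => P v + (x - P x)) '' (T.domain : Set 𝓗)) := by
      have h2 : (fun v : 𝓗 => P v + (x - P x)) x = x := by simp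
      have h3 := image_closure_subset_closure_image (s := (T.domain : Set 𝓗)) hcont
      exact h3 ⟨x, hx, h2⟩
    exact closure_mono himg h1
  -- symmetry of the compression
  have hSsym : (T.compress P).IsFormalAdjoint (T.compress P) := by
    intro a b
    rw [compress_apply' T P a, compress_apply' T P b]
    rw [hPsym, ← hPsym (a:𝓗)]
    exact hTsym ⟨P (a:𝓗), a.2⟩ ⟨P (b:𝓗), b.2⟩
  have hle : T.compress P ≤ (T.compress P).adjoint :=
    LinearPMap.IsFormalAdjoint.le_adjoint hSd hSsym
  -- adjoint domain is contained in the domain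
  have hdom : (T.compress P).adjoint.domain ≤ (T.compress P).domain := by
    intro u hu
    have hform := LinearPMap.adjoint_isFormalAdjoint hSd
    have key : ∀ v : T.domain,
        ⟪(T.compress P).adjoint ⟨u, hu⟩ - (ContinuousLinearMap.adjoint C) (P u), (v:𝓗)⟫_ℂ
          = ⟪P u, T v⟫_ℂ := by
      intro v
      have hvS : (v:𝓗) ∈ (T.compress P).domain := by
        show P (v:𝓗) ∈ T.domain; exact hPD v v.2
      have h1 : ⟪(T.compress P).adjoint ⟨u, hu⟩, ((⟨(v:𝓗), hvS⟩ : (T.compress P).domain):𝓗)⟫_ℂ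
          = ⟪u, (T.compress P) ⟨(v:𝓗), hvS⟩⟫_ℂ := hform ⟨u, hu⟩ ⟨(v:𝓗), hvS⟩
      rw [compress_apply' T P ⟨(v:𝓗), hvS⟩] at h1
      have hTv : T ⟨P (v:𝓗), hvS⟩ = C (v:𝓗) + P (T v) := by
        rw [hC v, sub_add_cancel]
      rw [hTv] at h1
      rw [inner_sub_left, h1, map_add, inner_add_right,
        ContinuousLinearMap.adjoint_inner_left,
        ← hPsym u (C (v:𝓗)), ← hPsym u (P ((T v : 𝓗))),
        ← hPsym (P u) ((T v : 𝓗)), hPP u]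
      ring
    have hPu : P u ∈ T.adjoint.domain :=
      LinearPMap.mem_adjoint_domain_of_exists _ ⟨_, key⟩
    have hdomeq : T.adjoint.domain = T.domain := congrArg LinearPMap.domain hT'
    show P u ∈ T.domain
    rw [← hdomeq]; exact hPu
  have hSA : IsSelfAdjoint (T.compress P) := by
    rw [LinearPMap.isSelfAdjoint_def]
    apply le_antisymm _ hle
    refine ⟨hdom, ?_⟩
    intro x y hxy
    have hx' : (x:𝓗) ∈ (T.compress P).domain := hdom x.2
    have h5 : (T.compress P) ⟨(x:𝓗), hx'⟩ = (T.compress P).adjoint x := hle.2 rfl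
    rw [← h5]
    exact congrArg (fun a => (T.compress P) a) (Subtype.ext hxy)
  refine ⟨hSA, ?_⟩
  intro z hz RA RS hRA hRS hRAeq hRSeq
  have hz0 : z ≠ 0 := fun h => hz (by simp [h])
  have himpos : 0 < |z.im| := abs_pos.mpr hz
  have hd0 : 0 ≤ d := le_trans (norm_nonneg C) hCn
  -- norm bounds for the resolvents
  have hRAn : ∀ t : 𝓗, ‖RA t‖ ≤ |z.im|⁻¹ * ‖t‖ := by
    intro t
    have := sym_lower T hTsym z ⟨RA t, hRA t⟩
    rw [hRAeq t] at this
    calc ‖RA t‖ = ‖((⟨RA t, hRA t⟩ : T.domain):𝓗)‖ := rfl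
      _ ≤ |z.im|⁻¹ * ‖t‖ := by
          rw [inv_mul_eq_div, le_div_iff₀ himpos, mul_comm]; exact this
  have hRSn : ∀ t : 𝓗, ‖RS t‖ ≤ |z.im|⁻¹ * ‖t‖ := by
    intro t
    have := sym_lower (T.compress P) hSsym z ⟨RS t, hRS t⟩
    rw [hRSeq t] at this
    calc ‖RS t‖ = ‖((⟨RS t, hRS t⟩ : (T.compress P).domain):𝓗)‖ := rfl
      _ ≤ |z.im|⁻¹ * ‖t‖ := by
          rw [inv_mul_eq_div, le_div_iff₀ himpos, mul_comm]; exact this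
  have hCle : ∀ t : 𝓗, ‖C t‖ ≤ d * ‖t‖ := fun t =>
    (C.le_opNorm t).trans (mul_le_mul_of_nonneg_right hCn (norm_nonneg t))
  -- Step A: commutation of RA with P
  have stepA : ∀ y : 𝓗, P (RA y) = RA (P y) + RA (C (RA y)) := by
    intro y
    have hw : RA y ∈ T.domain := hRA y
    have hPw : P (RA y) ∈ T.domain := hPD _ hw
    have hb : RA (P y) + RA (C (RA y)) ∈ T.domain :=
      T.domain.add_mem (hRA _) (hRA _)
    refine sym_inj T hTsym hz ⟨P (RA y), hPw⟩ ⟨RA (P y) + RA (C (RA y)), hb⟩ ?_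
    have e1 : T ⟨P (RA y), hPw⟩ = C (RA y) + P (T ⟨RA y, hw⟩) := by
      rw [hC ⟨RA y, hw⟩, sub_add_cancel]
    have e2 : P (T ⟨RA y, hw⟩) - z • P (RA y) = P y := by
      rw [← map_smul, ← map_sub, hRAeq y]
    have eLHS : T ⟨P (RA y), hPw⟩ - z • P (RA y) = C (RA y) + P y := by
      rw [e1, add_sub_assoc, e2]
    have hsplit : T ⟨RA (P y) + RA (C (RA y)), hb⟩
        = T ⟨RA (P y), hRA _⟩ + T ⟨RA (C (RA y)), hRA _⟩ :=
      T.map_add ⟨RA (P y), hRA _⟩ ⟨RA (C (RA y)), hRA _⟩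
    have eRHS : T ⟨RA (P y) + RA (C (RA y)), hb⟩ - z • (RA (P y) + RA (C (RA y)))
        = C (RA y) + P y := by
      rw [hsplit, smul_add, add_sub_add_comm, hRAeq (P y), hRAeq (C (RA y))]
      abel
    rw [eLHS, eRHS]
  -- Step B: the pointwise identity
  have stepB : ∀ x : 𝓗, (P ∘L (RA - RS) ∘L P) x = -(RA (C (RA (C (RS (P x)))))) := by
    intro x
    have hu : P (RS (P x)) ∈ T.domain := hRS (P x)
    have hSequ : P (T ⟨P (RS (P x)), hu⟩) - z • RS (P x) = P x := by
      have := hRSeq (P x)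
      rwa [compress_apply' T P ⟨RS (P x), hRS (P x)⟩] at this
    -- (i) P u = u
    have hPu : P (RS (P x)) = RS (P x) := by
      have h1 : P (P (T ⟨P (RS (P x)), hu⟩)) - P (z • RS (P x)) = P (P x) := by
        rw [← map_sub, hSequ]
      rw [hPP, map_smul, hPP] at h1
      have h2 : z • P (RS (P x)) = z • RS (P x) := by
        have h3 := h1.trans hSequ.symm
        exact (sub_right_inj.mp h3)
      exact smul_right_injective 𝓗 hz0 h2
    have hu' : RS (P x) ∈ T.domain := by rw [← hPu]; exact hu
    have hTu : T ⟨P (RS (P x)), hu⟩ = T ⟨RS (P x), hu'⟩ :=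
      congrArg (fun a => T a) (Subtype.ext hPu)
    have hCu : C (RS (P x)) = T ⟨RS (P x), hu'⟩ - P (T ⟨RS (P x), hu'⟩) := by
      have h0 := hC ⟨RS (P x), hu'⟩
      rwa [show (⟨P (RS (P x)), hPD _ hu'⟩ : T.domain) = ⟨RS (P x), hu'⟩
        from Subtype.ext hPu] at h0
    have hPCu : P (C (RS (P x))) = 0 := by
      rw [hCu, map_sub, hPP, sub_self]
    -- (iv)
    have hSequ' : P (T ⟨RS (P x), hu'⟩) - z • RS (P x) = P x := by
      rw [← hTu]; exact hSequ
    have e4 : T ⟨RS (P x), hu'⟩ - z • RS (P x) = C (RS (P x)) + P x := by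
      rw [hCu,
        show (T ⟨RS (P x), hu'⟩ : 𝓗) - z • RS (P x)
          = (T ⟨RS (P x), hu'⟩ - P (T ⟨RS (P x), hu'⟩))
            + (P (T ⟨RS (P x), hu'⟩) - z • RS (P x)) from by abel,
        hSequ']
    -- (v)
    have hb : RA (C (RS (P x))) + RA (P x) ∈ T.domain :=
      T.domain.add_mem (hRA _) (hRA _)
    have e5 : RS (P x) = RA (C (RS (P x))) + RA (P x) := by
      refine sym_inj T hTsym hz ⟨RS (P x), hu'⟩ ⟨RA (C (RS (P x))) + RA (P x), hb⟩ ?_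
      have hsplit : T ⟨RA (C (RS (P x))) + RA (P x), hb⟩
          = T ⟨RA (C (RS (P x))), hRA _⟩ + T ⟨RA (P x), hRA _⟩ :=
        T.map_add ⟨RA (C (RS (P x))), hRA _⟩ ⟨RA (P x), hRA _⟩
      rw [e4, hsplit, smul_add, add_sub_add_comm, hRAeq (C (RS (P x))), hRAeq (P x)]
    -- assemble
    have e6 : RA (P x) - RS (P x) = -(RA (C (RS (P x)))) := by
      conv_lhs => rw [e5]
      abel
    have e7 : P (RA (P x)) - P (RS (P x)) = -(RA (C (RA (C (RS (P x)))))) := by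
      rw [← map_sub, e6, map_neg, stepA (C (RS (P x))), hPCu, map_zero, zero_add]
    calc (P ∘L (RA - RS) ∘L P) x = P (RA (P x) - RS (P x)) := rfl
      _ = P (RA (P x)) - P (RS (P x)) := map_sub _ _ _
      _ = -(RA (C (RA (C (RS (P x)))))) := e7
  -- final norm estimate
  have hPn : ∀ x : 𝓗, ‖P x‖ ≤ ‖x‖ := by
    intro x
    rcases eq_or_lt_of_le (norm_nonneg (P x)) with h | h
    · rw [← h]; exact norm_nonneg x
    · have h1 : (⟪P x, P x⟫_ℂ).re = (⟪x, P (P x)⟫_ℂ).re :=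
        congrArg Complex.re (hPsym x (P x))
      rw [hPP] at h1
      have h2 : ‖P x‖^2 = (⟪x, P x⟫_ℂ).re := by
        rw [← h1]; simpa using (inner_self_eq_norm_sq (𝕜 := ℂ) (P x)).symm
      have h3 : (⟪x, P x⟫_ℂ).re ≤ ‖x‖ * ‖P x‖ := by
        calc (⟪x, P x⟫_ℂ).re ≤ |(⟪x, P x⟫_ℂ).re| := le_abs_self _
          _ ≤ ‖⟪x, P x⟫_ℂ‖ := Complex.abs_re_le_norm _
          _ ≤ ‖x‖ * ‖P x‖ := norm_inner_le_norm _ _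
      nlinarith
  apply ContinuousLinearMap.opNorm_le_bound _ (by positivity)
  intro x
  rw [stepB x, norm_neg]
  calc ‖RA (C (RA (C (RS (P x)))))‖ ≤ |z.im|⁻¹ * ‖C (RA (C (RS (P x))))‖ := hRAn _
    _ ≤ |z.im|⁻¹ * (d * ‖RA (C (RS (P x)))‖) := by
        gcongr; exact hCle _
    _ ≤ |z.im|⁻¹ * (d * (|z.im|⁻¹ * ‖C (RS (P x))‖)) := by
        gcongr; exact hRAn _
    _ ≤ |z.im|⁻¹ * (d * (|z.im|⁻¹ * (d * ‖RS (P x)‖))) := by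
        gcongr; exact hCle _
    _ ≤ |z.im|⁻¹ * (d * (|z.im|⁻¹ * (d * (|z.im|⁻¹ * ‖P x‖)))) := by
        gcongr; exact hRSn _
    _ ≤ |z.im|⁻¹ * (d * (|z.im|⁻¹ * (d * (|z.im|⁻¹ * ‖x‖)))) := by
        gcongr; exact hPn x
    _ = d ^ 2 / |z.im| ^ 3 * ‖x‖ := by
        have hne : |z.im| ≠ 0 := ne_of_gt himpos
        field_simp
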